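/- Let r ≥ 1 and let G be a finite simple graph containing r T-regions R₁, …, Rᵣ that all share one common vertex c, which is an outer vertex of each of them, and which are otherwise pairwise vertex-disjoint. Then every cycle of G contains at most 2r + 2 of the 3r simplicial vertices belonging to these T-regions. -/

import Mathlib

/-- The graph `T` on nine vertices: `0,1,2` are the outer vertices `o₁,o₂,o₃`,
`3,4,5` are `g₁,g₂,g₃` and `6,7,8` are the simplicial vertices `w₁,w₂,w₃`. -/
def TGraph : SimpleGraph (Fin 9) :=
  SimpleGraph.fromRel fun a b =>
    (a, b) ∈ ([(0,1),(0,2),(1,2),(3,4),(3,5),(4,5),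
      (3,0),(3,1),(4,1),(4,2),(5,2),(5,0),
      (6,0),(6,1),(6,3),(7,1),(7,2),(7,4),
      (8,2),(8,0),(8,5)] : List (Fin 9 × Fin 9))

namespace AuxT
variable {α : Type*} {R : α → α → Prop} {Q : List α} {x y v h t : α}

lemma unique_split {a : α} : ∀ {s s' t t' : List α}, s ++ a :: t = s' ++ a :: t' →
    a ∉ s → a ∉ s' → s = s' ∧ t = t' := by
  intro s
  induction s with
  | nil =>
    intro s' t t' h ha ha'
    cases s' with
    | nil => simpa using h
    | cons b s'' =>
      simp only [List.nil_append, List.cons_append, List.cons.injEq] at h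
      obtain ⟨rfl, -⟩ := h
      exact absurd List.mem_cons_self ha'
  | cons b s₂ ih =>
    intro s' t t' h ha ha'
    cases s' with
    | nil =>
      simp only [List.nil_append, List.cons_append, List.cons.injEq] at h
      obtain ⟨rfl, -⟩ := h
      exact absurd List.mem_cons_self ha
    | cons b' s₂' =>
      simp only [List.cons_append, List.cons.injEq] at h
      obtain ⟨rfl, h2⟩ := h
      have := ih h2 (fun hm => ha (List.mem_cons_of_mem _ hm))
        (fun hm => ha' (List.mem_cons_of_mem _ hm))
      exact ⟨by rw [this.1], this.2⟩

lemma rel_of_infix (hc : List.Chain' R Q) (hi : [x, y] <:+: Q) : R x y := by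
  have := hc.infix hi
  simpa using this.rel_head

lemma exists_pred : ∀ (Q : List α), v ∈ Q → Q.head? ≠ some v → ∃ x, [x, v] <:+: Q := by
  intro Q
  induction Q with
  | nil => simp
  | cons a Q' ih =>
    intro hv hh
    have hva : v ≠ a := fun h => hh (by simp [h])
    have hv' : v ∈ Q' := by rcases List.mem_cons.mp hv with h | h; exact absurd h hva; exact h
    by_cases hhd : Q'.head? = some v
    · cases Q' with
      | nil => simp at hhd
      | cons b Q'' =>
        have : b = v := by simpa using hhd
        subst this
        exact ⟨a, [], Q'', by simp⟩
    · obtain ⟨x, hx⟩ := ih hv' hhd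
      exact ⟨x, hx.trans (List.suffix_cons a Q').isInfix⟩

lemma exists_succ : ∀ (Q : List α), v ∈ Q → Q.getLast? ≠ some v → ∃ y, [v, y] <:+: Q := by
  intro Q
  induction Q with
  | nil => simp
  | cons a Q' ih =>
    intro hv hl
    by_cases hva : v = a
    · subst hva
      cases Q' with
      | nil => simp at hl
      | cons b Q'' => exact ⟨b, [], Q'', by simp⟩
    · have hv' : v ∈ Q' := by rcases List.mem_cons.mp hv with h | h; exact absurd h hva; exact h
      cases Q' with
      | nil => simp at hv'
      | cons b Q'' =>
        rw [List.getLast?_cons_cons] at hl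
        obtain ⟨y, hy⟩ := ih hv' hl
        exact ⟨y, hy.trans (List.suffix_cons a _).isInfix⟩

lemma not_mem_of_nodup_append {l₁ l₂ : List α} (hn : (l₁ ++ v :: l₂).Nodup) : v ∉ l₁ := by
  rw [List.nodup_append] at hn
  exact fun hv => hn.2.2 v hv v List.mem_cons_self rfl

lemma uniq_pred (hn : Q.Nodup) (h1 : [x, v] <:+: Q) (h2 : [y, v] <:+: Q) : x = y := by
  obtain ⟨s, t, hst⟩ := h1
  obtain ⟨s', t', hst'⟩ := h2
  have e1 : Q = (s ++ [x]) ++ v :: t := by rw [← hst]; simp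
  have e2 : Q = (s' ++ [y]) ++ v :: t' := by rw [← hst']; simp
  have hv1 : v ∉ s ++ [x] := not_mem_of_nodup_append (e1 ▸ hn)
  have hv2 : v ∉ s' ++ [y] := not_mem_of_nodup_append (e2 ▸ hn)
  have := (unique_split (e1 ▸ e2 : (s ++ [x]) ++ v :: t = (s' ++ [y]) ++ v :: t') hv1 hv2).1
  have := congrArg List.getLast? this
  simpa using this

lemma uniq_succ (hn : Q.Nodup) (h1 : [v, x] <:+: Q) (h2 : [v, y] <:+: Q) : x = y := by
  obtain ⟨s, t, hst⟩ := h1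
  obtain ⟨s', t', hst'⟩ := h2
  have e1 : Q = s ++ v :: (x :: t) := by rw [← hst]; simp
  have e2 : Q = s' ++ v :: (y :: t') := by rw [← hst']; simp
  have hv1 : v ∉ s := not_mem_of_nodup_append (e1 ▸ hn)
  have hv2 : v ∉ s' := not_mem_of_nodup_append (e2 ▸ hn)
  have := (unique_split (e1 ▸ e2 : s ++ v :: (x :: t) = s' ++ v :: (y :: t')) hv1 hv2).2
  exact (by simpa using this : x = y ∧ t = t').1

lemma head_no_pred (hn : Q.Nodup) (hh : Q.head? = some h) : ¬ [x, h] <:+: Q := by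
  rintro ⟨s, t, hst⟩
  cases s with
  | nil =>
    simp only [List.nil_append] at hst
    subst hst
    simp only [List.head?] at hh
    obtain rfl : x = h := by simpa using hh
    simp at hn
  | cons a s₂ =>
    have : Q = a :: (s₂ ++ x :: h :: t) := by rw [← hst]; simp
    obtain rfl : a = h := by rw [this] at hh; simpa using hh
    rw [this] at hn
    exact (List.nodup_cons.mp hn).1 (by simp)

lemma last_no_succ (hn : Q.Nodup) (hl : Q.getLast? = some t) : ¬ [t, y] <:+: Q := by
  rintro ⟨s, s', hst⟩
  have e : Q = s ++ t :: (y :: s') := by rw [← hst]; simp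
  rw [e] at hn hl
  rw [List.getLast?_append_of_ne_nil _ (by simp), List.getLast?_cons_cons] at hl
  have ht : t ∈ y :: s' := List.mem_of_getLast? hl
  exact (List.nodup_cons.mp hn.of_append_right).1 ht

lemma pred_ne_succ (hn : Q.Nodup) (h1 : [x, v] <:+: Q) (h2 : [v, y] <:+: Q) : x ≠ y := by
  rintro rfl
  obtain ⟨s, t, hst⟩ := h1
  obtain ⟨s', t', hst'⟩ := h2
  have e1 : Q = (s ++ [x]) ++ v :: t := by rw [← hst]; simp
  have e2 : Q = s' ++ v :: (x :: t') := by rw [← hst']; simp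
  have hv1 : v ∉ s ++ [x] := not_mem_of_nodup_append (e1 ▸ hn)
  have hv2 : v ∉ s' := not_mem_of_nodup_append (e2 ▸ hn)
  obtain ⟨h3, h4⟩ := unique_split (e1 ▸ e2 : (s ++ [x]) ++ v :: t = s' ++ v :: (x :: t')) hv1 hv2
  -- t = x :: t', and x ∈ s ++ [x]; so Q = s ++ [x] ++ v :: x :: t' has x twice
  rw [e1, h4] at hn
  rw [List.nodup_append] at hn
  exact hn.2.2 x (by simp : x ∈ s ++ [x]) x (by simp) rfl

lemma head_ne_last_of_mid (hn : Q.Nodup) (hh : Q.head? = some h) (hl : Q.getLast? = some t)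
    (hv : v ∈ Q) (hvh : v ≠ h) : h ≠ t := by
  rintro rfl
  obtain ⟨ys, rfl⟩ := List.getLast?_eq_some_iff.mp hl
  cases ys with
  | nil => simp at hv; exact hvh hv
  | cons a ys₂ =>
    obtain rfl : a = h := by simpa using hh
    simp only [List.cons_append, List.nodup_cons] at hn
    exact hn.1 (by simp)
end AuxT

namespace AuxT

variable {α : Type*} {R : α → α → Prop} {Q : List α} {x y v : α}

/-- symmetric "consecutive in list" relation -/
def AdjL (Q : List α) (a b : α) : Prop := [a, b] <:+: Q ∨ [b, a] <:+: Q

lemma AdjL.symm {a b : α} (h : AdjL Q a b) : AdjL Q b a := h.elim Or.inr Or.inl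

lemma AdjL.mem_right {a b : α} (h : AdjL Q a b) : b ∈ Q := by
  rcases h with h | h
  · exact h.mem (by simp)
  · exact h.mem (by simp)

lemma endpoint_partner_unique {e w₁ w₂ : α} (hn : Q.Nodup)
    (he : Q.head? = some e ∨ Q.getLast? = some e)
    (h1 : AdjL Q e w₁) (h2 : AdjL Q e w₂) : w₁ = w₂ := by
  rcases he with he | he
  · have k1 : [e, w₁] <:+: Q := h1.elim id (fun h => absurd h (head_no_pred hn he))
    have k2 : [e, w₂] <:+: Q := h2.elim id (fun h => absurd h (head_no_pred hn he))
    exact uniq_succ hn k1 k2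
  · have k1 : [w₁, e] <:+: Q := h1.elim (fun h => absurd h (last_no_succ hn he)) id
    have k2 : [w₂, e] <:+: Q := h2.elim (fun h => absurd h (last_no_succ hn he)) id
    exact uniq_pred hn k1 k2

lemma mid_two_partners (hn : Q.Nodup) (hv : v ∈ Q)
    (hh : Q.head? ≠ some v) (hl : Q.getLast? ≠ some v) :
    ∃ a b, a ≠ b ∧ a ∈ Q ∧ b ∈ Q ∧ [a, v] <:+: Q ∧ [v, b] <:+: Q := by
  obtain ⟨a, ha⟩ := exists_pred Q hv hh
  obtain ⟨b, hb⟩ := exists_succ Q hv hl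
  exact ⟨a, b, pred_ne_succ hn ha hb, ha.mem (by simp), hb.mem (by simp [List.mem_cons]),
    ha, hb⟩

end AuxT

lemma adj6 : ∀ x : Fin 9, TGraph.Adj x 6 → x = 0 ∨ x = 1 ∨ x = 3 := by
  simp only [TGraph, SimpleGraph.fromRel_adj]; decide

lemma adj7 : ∀ x : Fin 9, TGraph.Adj x 7 → x = 1 ∨ x = 2 ∨ x = 4 := by
  simp only [TGraph, SimpleGraph.fromRel_adj]; decide

lemma adj8 : ∀ x : Fin 9, TGraph.Adj x 8 → x = 0 ∨ x = 2 ∨ x = 5 := by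
  simp only [TGraph, SimpleGraph.fromRel_adj]; decide

open AuxT in
lemma Tfact {Q : List (Fin 9)} (hc : List.Chain' TGraph.Adj Q) (hn : Q.Nodup)
    (h6 : 6 ∈ Q) (h7 : 7 ∈ Q) (h8 : 8 ∈ Q)
    {h t : Fin 9} (hh : Q.head? = some h) (hl : Q.getLast? = some t)
    (hh3 : h.1 < 3) (ht3 : t.1 < 3) :
    ∀ j : Fin 9, j.1 < 3 → j ∈ Q := by
  by_contra hcon
  push_neg at hcon
  obtain ⟨j₀, hj₀3, hj₀⟩ := hcon
  have hhQ : h ∈ Q := List.mem_of_mem_head? (by rw [hh]; exact rfl)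
  have htQ : t ∈ Q := List.mem_of_getLast? hl
  have hne : h ≠ t := head_ne_last_of_mid hn hh hl h6 (by rintro rfl; exact absurd hh3 (by decide))
  -- partners of a middle vertex w ∈ {6,7,8}
  have partners : ∀ w : Fin 9, 6 ≤ w.1 → w ∈ Q →
      ∃ a b, a ≠ b ∧ a ≠ j₀ ∧ b ≠ j₀ ∧ TGraph.Adj a w ∧ TGraph.Adj w b ∧
        AdjL Q w a ∧ AdjL Q w b := by
    intro w hw hwQ
    have hwh : Q.head? ≠ some w := fun e => by
      rw [hh] at e
      obtain rfl : h = w := by simpa using e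
      omega
    have hwl : Q.getLast? ≠ some w := fun e => by
      rw [hl] at e
      obtain rfl : t = w := by simpa using e
      omega
    obtain ⟨a, b, hab, haQ, hbQ, ha, hb⟩ := mid_two_partners hn hwQ hwh hwl
    exact ⟨a, b, hab, fun e => hj₀ (e ▸ haQ), fun e => hj₀ (e ▸ hbQ),
      rel_of_infix hc ha, rel_of_infix hc hb, Or.inr ha, Or.inl hb⟩
  obtain ⟨a6, b6, hab6, haj6, hbj6, hA6, hB6, hQ6a, hQ6b⟩ := partners 6 (by decide) h6
  obtain ⟨a7, b7, hab7, haj7, hbj7, hA7, hB7, hQ7a, hQ7b⟩ := partners 7 (by decide) h7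
  obtain ⟨a8, b8, hab8, haj8, hbj8, hA8, hB8, hQ8a, hQ8b⟩ := partners 8 (by decide) h8
  -- endpoints are the two outer vertices other than j₀
  have hendpt : ∀ e : Fin 9, e.1 < 3 → e ≠ j₀ → e ∈ Q →
      Q.head? = some e ∨ Q.getLast? = some e := by
    intro e he3 hej heQ
    -- {h, t} = {0,1,2} \ {j₀}
    by_contra hcon2
    push_neg at hcon2
    have heh : e ≠ h := fun hr => hcon2.1 (hr ▸ hh)
    have het : e ≠ t := fun hr => hcon2.2 (hr ▸ hl)
    have hhj : h ≠ j₀ := fun e' => hj₀ (e' ▸ hhQ)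
    have htj : t ≠ j₀ := fun e' => hj₀ (e' ▸ htQ)
    have trich : ∀ (x y z w : Fin 9), x.1 < 3 → y.1 < 3 → z.1 < 3 → w.1 < 3 →
        x ≠ y → x ≠ w → y ≠ w → z ≠ w → z = x ∨ z = y := by decide
    rcases trich h t e j₀ hh3 ht3 he3 hj₀3 hne hhj htj hej with rfl | rfl
    · exact heh rfl
    · exact het rfl
  have final : ∀ (e w w' : Fin 9), e.1 < 3 → e ≠ j₀ → w ≠ w' → AdjL Q w e → AdjL Q w' e →
      False := by
    intro e w w' he3 hej hww' k1 k2
    exact hww' (endpoint_partner_unique hn (hendpt e he3 hej k1.mem_right) k1.symm k2.symm)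
  have pick : ∀ (w p q a b : Fin 9), a ≠ b → (a = p ∨ a = q) → (b = p ∨ b = q) →
      AdjL Q w a → AdjL Q w b → AdjL Q w p := by
    intro w p q a b hab ha hb hQa hQb
    rcases ha with rfl | rfl
    · exact hQa
    · rcases hb with rfl | rfl
      · exact hQb
      · exact absurd rfl hab
  have pick3 : ∀ (w e1 e2 z a b : Fin 9), a ≠ b → (a = e1 ∨ a = e2 ∨ a = z) →
      (b = e1 ∨ b = e2 ∨ b = z) → AdjL Q w a → AdjL Q w b →
      (AdjL Q w e1 ∨ AdjL Q w e2) := by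
    intro w e1 e2 z a b hab ha hb hQa hQb
    rcases ha with rfl | rfl | rfl
    · exact Or.inl hQa
    · exact Or.inr hQa
    · rcases hb with rfl | rfl | rfl
      · exact Or.inl hQb
      · exact Or.inr hQb
      · exact absurd rfl hab
  have hj3 : j₀ = 0 ∨ j₀ = 1 ∨ j₀ = 2 := by
    have : ∀ z : Fin 9, z.1 < 3 → z = 0 ∨ z = 1 ∨ z = 2 := by decide
    exact this j₀ hj₀3
  have res : ∀ (x p q r : Fin 9), (x = p ∨ x = q ∨ x = r) → x ≠ p → (x = q ∨ x = r) := by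
    intro x p q r ho hx
    rcases ho with rfl | ho
    · exact absurd rfl hx
    · exact ho
  have res2 : ∀ (x p q r : Fin 9), (x = p ∨ x = q ∨ x = r) → x ≠ q → (x = p ∨ x = r) := by
    intro x p q r ho hx
    rcases ho with rfl | rfl | rfl
    · exact Or.inl rfl
    · exact absurd rfl hx
    · exact Or.inr rfl
  have o6a := adj6 a6 hA6
  have o6b := adj6 b6 hB6.symm
  have o7a := adj7 a7 hA7
  have o7b := adj7 b7 hB7.symm
  have o8a := adj8 a8 hA8
  have o8b := adj8 b8 hB8.symm
  rcases hj3 with rfl | rfl | rfl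
  · have A61 : AdjL Q 6 1 := pick 6 1 3 a6 b6 hab6 (res a6 0 1 3 o6a haj6)
      (res b6 0 1 3 o6b hbj6) hQ6a hQ6b
    have A82 : AdjL Q 8 2 := pick 8 2 5 a8 b8 hab8 (res a8 0 2 5 o8a haj8)
      (res b8 0 2 5 o8b hbj8) hQ8a hQ8b
    rcases pick3 7 1 2 4 a7 b7 hab7 o7a o7b hQ7a hQ7b with A7 | A7
    · exact final 1 7 6 (by decide) (by decide) (by decide) A7 A61
    · exact final 2 7 8 (by decide) (by decide) (by decide) A7 A82
  · have A60 : AdjL Q 6 0 := pick 6 0 3 a6 b6 hab6 (res2 a6 0 1 3 o6a haj6)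
      (res2 b6 0 1 3 o6b hbj6) hQ6a hQ6b
    have A72 : AdjL Q 7 2 := pick 7 2 4 a7 b7 hab7 (res a7 1 2 4 o7a haj7)
      (res b7 1 2 4 o7b hbj7) hQ7a hQ7b
    rcases pick3 8 0 2 5 a8 b8 hab8 o8a o8b hQ8a hQ8b with A8 | A8
    · exact final 0 8 6 (by decide) (by decide) (by decide) A8 A60
    · exact final 2 8 7 (by decide) (by decide) (by decide) A8 A72
  · have A71 : AdjL Q 7 1 := pick 7 1 4 a7 b7 hab7 (res2 a7 1 2 4 o7a haj7)
      (res2 b7 1 2 4 o7b hbj7) hQ7a hQ7b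
    have A80 : AdjL Q 8 0 := pick 8 0 5 a8 b8 hab8 (res2 a8 0 2 5 o8a haj8)
      (res2 b8 0 2 5 o8b hbj8) hQ8a hQ8b
    rcases pick3 6 0 1 3 a6 b6 hab6 o6a o6b hQ6a hQ6b with A6 | A6
    · exact final 0 6 8 (by decide) (by decide) (by decide) A6 A80
    · exact final 1 6 7 (by decide) (by decide) (by decide) A6 A71


namespace AuxT

lemma run_extract {α : Type*} (X : α → Prop) :
    ∀ (n : ℕ) (L : List α), L.length ≤ n → ∀ w : α, w ∈ L → X w →
    ∃ pre P suf, L = pre ++ P ++ suf ∧ w ∈ P ∧ (∀ x ∈ P, X x) ∧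
      (pre = [] ∨ ∃ z, pre.getLast? = some z ∧ ¬ X z) ∧
      (suf = [] ∨ ∃ z, suf.head? = some z ∧ ¬ X z) := by
  classical
  intro n
  induction n with
  | zero =>
    intro L hL w hw _
    rw [Nat.le_zero, List.length_eq_zero_iff] at hL
    subst hL; simp at hw
  | succ n ih =>
    intro L hL w hw hXw
    cases L with
    | nil => simp at hw
    | cons a L' =>
      simp only [List.length_cons, Nat.add_le_add_iff_right] at hL
      by_cases hXa : X a
      · -- initial run
        set p : α → Bool := fun x => decide (X x) with hp
        have hpa : p a = true := by simp [hp, hXa]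
        set P₀ : List α := (a :: L').takeWhile p with hP₀
        set S₀ : List α := (a :: L').dropWhile p with hS₀
        have hsplit : P₀ ++ S₀ = a :: L' := List.takeWhile_append_dropWhile ..
        have hallP₀ : ∀ x ∈ P₀, X x := fun x hx => by
          have := List.mem_takeWhile_imp hx
          simpa [hp] using this
        have hS₀head : ∀ z, S₀.head? = some z → ¬ X z := by
          intro z hz
          have h3 := List.head?_dropWhile_not p (a :: L')
          rw [← hS₀, hz] at h3
          simpa [hp] using h3
        by_cases hwP : w ∈ P₀
        · exact ⟨[], P₀, S₀, by simp [hsplit], hwP, hallP₀, Or.inl rfl,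
            by
              cases hSnil : S₀ with
              | nil => exact Or.inl rfl
              | cons z S₁ => exact Or.inr ⟨z, by simp, hS₀head z (by simp [hSnil])⟩⟩
        · have hwS : w ∈ S₀ := by
            have : w ∈ P₀ ++ S₀ := hsplit.symm ▸ hw
            rcases List.mem_append.mp this with h | h
            · exact absurd h hwP
            · exact h
          have hP₀ne : P₀ ≠ [] := by
            simp [hP₀, List.takeWhile_cons, hpa]
          have hlen : S₀.length ≤ n := by
            have h1 : P₀.length + S₀.length = L'.length + 1 := by
              rw [← List.length_append, hsplit]; simp
            have h2 : 1 ≤ P₀.length := List.length_pos_iff.mpr hP₀ne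
            omega
          obtain ⟨pre', P, suf, hdec, hwP', hallP, hpre', hsuf⟩ := ih S₀ hlen w hwS hXw
          refine ⟨P₀ ++ pre', P, suf, by rw [← hsplit, hdec]; simp, hwP', hallP, ?_, hsuf⟩
          rcases hpre' with rfl | ⟨z, hz1, hz2⟩
          · -- impossible: P.head would be S₀.head, not X
            exfalso
            cases P with
            | nil => simp at hwP'
            | cons b P₁ =>
              have : S₀.head? = some b := by rw [hdec]; simp
              exact hS₀head b this (hallP b (by simp))
          · refine Or.inr ⟨z, ?_, hz2⟩
            rw [List.getLast?_append_of_ne_nil _ (by rintro rfl; simp at hz1)]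
            exact hz1
      · -- a not in X, recurse on L'
        have hwa : w ≠ a := fun h => hXa (h ▸ hXw)
        have hw' : w ∈ L' := by
          rcases List.mem_cons.mp hw with h | h
          · exact absurd h hwa
          · exact h
        obtain ⟨pre', P, suf, hdec, hwP', hallP, hpre', hsuf⟩ :=
          ih L' hL w hw' hXw
        refine ⟨a :: pre', P, suf, by rw [hdec]; simp, hwP', hallP, ?_, hsuf⟩
        rcases hpre' with rfl | ⟨z, hz1, hz2⟩
        · exact Or.inr ⟨a, by simp, hXa⟩
        · refine Or.inr ⟨z, ?_, hz2⟩
          cases pre' with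
          | nil => simp at hz1
          | cons b pre₂ => rw [List.getLast?_cons_cons]; exact hz1


variable {V : Type*} {G : SimpleGraph V}

lemma getVert_pair_infix {u v : V} :
    ∀ (p : G.Walk u v) (i : ℕ), i < p.length →
      [p.getVert i, p.getVert (i+1)] <:+: p.support := by
  intro p
  induction p with
  | nil => intro i hi; simp at hi
  | @cons a b w hadj q ih =>
    intro i hi
    cases i with
    | zero =>
      refine ⟨[], (q.support.tail), ?_⟩
      simp only [SimpleGraph.Walk.support_cons, SimpleGraph.Walk.getVert_zero,
        SimpleGraph.Walk.getVert_cons_succ, List.nil_append]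
      rw [q.support_eq_cons]
      simp
    | succ i' =>
      have := ih i' (by simpa [SimpleGraph.Walk.length_cons, Nat.succ_lt_succ_iff] using hi)
      simp only [SimpleGraph.Walk.getVert_cons_succ]
      exact this.trans (by rw [SimpleGraph.Walk.support_cons]
                           exact (List.suffix_cons a q.support).isInfix)

lemma toSubgraph_adj_infix {u v : V} (p : G.Walk u v) {x y : V}
    (h : p.toSubgraph.Adj x y) :
    [x, y] <:+: p.support ∨ [y, x] <:+: p.support := by
  rw [SimpleGraph.Walk.toSubgraph_adj_iff] at h
  obtain ⟨i, hi, hlen⟩ := h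
  have hinf := getVert_pair_infix p i hlen
  rw [Sym2.eq_iff] at hi
  rcases hi with ⟨rfl, rfl⟩ | ⟨rfl, rfl⟩
  · exact Or.inl hinf
  · exact Or.inr hinf

/-- In a cycle through `c`, `c` has at most two distinct cycle-neighbours. -/
lemma cycle_partners {c : V} {D : G.Walk c c} (hD : D.IsCycle)
    {x₁ x₂ x₃ : V} (h1 : D.toSubgraph.Adj c x₁) (h2 : D.toSubgraph.Adj c x₂)
    (h3 : D.toSubgraph.Adj c x₃) : x₁ = x₂ ∨ x₁ = x₃ ∨ x₂ = x₃ := by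
  set N := D.support.tail with hN
  have hnodup : N.Nodup := hD.support_nodup
  have hsup : D.support = c :: N := D.support_eq_cons
  have hNne : N ≠ [] := by
    intro h
    have h4 := hD.three_le_length
    have h5 := D.length_support
    rw [hsup, h, List.length_cons, List.length_nil] at h5
    omega
  have h0 : D.support.getLast? = some c := by
    rw [List.getLast?_eq_getLast_of_ne_nil (by simp)]
    simp
  have hlastN : N.getLast? = some c := by
    rw [hsup, (by simp : c :: N = [c] ++ N),
      List.getLast?_append_of_ne_nil _ hNne] at h0
    exact h0
  -- classification of partners
  have classify : ∀ x, D.toSubgraph.Adj c x →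
      (N.head? = some x ∨ ∃ s, N = s ++ [x, c]) := by
    intro x hx
    have hxc : x ≠ c := (hx.adj_sub.ne).symm
    rcases toSubgraph_adj_infix D hx with hinf | hinf
    · -- [c, x] infix of c :: N
      rw [hsup] at hinf
      rcases List.infix_cons_iff.mp hinf with hpre | hinf'
      · obtain ⟨t, ht⟩ := hpre
        have hxt : x :: t = N := by simpa using ht
        left
        rw [← hxt]
        rfl
      · exfalso
        obtain ⟨s, t, hst⟩ := hinf'
        have e : N = s ++ c :: (x :: t) := by rw [← hst]; simp
        have hcnot : c ∉ x :: t := by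
          rw [e, List.nodup_append] at hnodup
          exact (List.nodup_cons.mp hnodup.2.1).1
        rw [e, List.getLast?_append_of_ne_nil _ (by simp),
          List.getLast?_cons_cons] at hlastN
        exact hcnot (List.mem_of_getLast? hlastN)
    · -- [x, c] infix of c :: N
      rw [hsup] at hinf
      rcases List.infix_cons_iff.mp hinf with hpre | hinf'
      · obtain ⟨t, ht⟩ := hpre
        have : x = c := by simpa using (congrArg List.head? ht)
        exact absurd this hxc
      · obtain ⟨s, t, hst⟩ := hinf'
        have e : N = s ++ x :: (c :: t) := by rw [← hst]; simp
        have ht0 : t = [] := by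
          cases t with
          | nil => rfl
          | cons d t₂ =>
            exfalso
            rw [e, List.getLast?_append_of_ne_nil _ (by simp),
              List.getLast?_cons_cons, List.getLast?_cons_cons] at hlastN
            have hmem : c ∈ d :: t₂ := List.mem_of_getLast? hlastN
            rw [e, List.nodup_append] at hnodup
            have h6 := hnodup.2.1
            exact (List.nodup_cons.mp (List.nodup_cons.mp h6).2).1 hmem
        right
        exact ⟨s, by rw [e, ht0]⟩
  have predu : ∀ {s s' : List V} {x x' : V}, N = s ++ [x, c] → N = s' ++ [x', c] → x = x' := by
    intro s s' x x' e e'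
    have hdl : (s ++ [x, c]).dropLast = (s' ++ [x', c]).dropLast := by rw [← e, ← e']
    rw [(by simp : s ++ [x, c] = (s ++ [x]) ++ [c]),
      (by simp : s' ++ [x', c] = (s' ++ [x']) ++ [c]),
      List.dropLast_concat, List.dropLast_concat] at hdl
    have := congrArg List.getLast? hdl
    simpa using this
  have hdu : ∀ {x x' : V}, N.head? = some x → N.head? = some x' → x = x' := by
    intro x x' e e'
    rw [e] at e'
    exact Option.some.inj e'
  rcases classify x₁ h1 with c1 | ⟨s1, e1⟩ <;> rcases classify x₂ h2 with c2 | ⟨s2, e2⟩ <;>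
    rcases classify x₃ h3 with c3 | ⟨s3, e3⟩
  · exact Or.inl (hdu c1 c2)
  · exact Or.inl (hdu c1 c2)
  · exact Or.inr (Or.inl (hdu c1 c3))
  · exact Or.inr (Or.inr (predu e2 e3))
  · exact Or.inr (Or.inr (hdu c2 c3))
  · exact Or.inr (Or.inl (predu e1 e3))
  · exact Or.inl (predu e1 e2)
  · exact Or.inl (predu e1 e2)


lemma support_infix_toSubgraph_adj {x y : V} : ∀ {u v : V} (p : G.Walk u v),
    [x, y] <:+: p.support → p.toSubgraph.Adj x y := by
  intro u v p
  induction p with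
  | nil =>
    intro h
    have := h.length_le
    simp at this
  | @cons a b w hadj q ih =>
    intro h
    rw [SimpleGraph.Walk.support_cons] at h
    rcases List.infix_cons_iff.mp h with hpre | hinf
    · obtain ⟨t, ht⟩ := hpre
      have h1 : x = a ∧ y :: t = q.support := by simpa using ht
      obtain ⟨rfl, h2⟩ := h1
      have hb : y = b := by
        have := congrArg List.head? h2
        rw [q.support_eq_cons] at this
        simp only [List.head?_cons, Option.some.injEq] at this
        exact this
      subst hb
      exact Or.inl (by simp)
    · exact Or.inr (ih hinf)


lemma chain'_map_of_mem {f : Fin 9 → V} (ψ : V → Fin 9)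
    (hind : ∀ i j, G.Adj (f i) (f j) ↔ TGraph.Adj i j)
    (hψ : ∀ i, ψ (f i) = i) :
    ∀ (l : List V), (∀ x ∈ l, x ∈ Set.range f) → List.Chain' G.Adj l →
      List.Chain' TGraph.Adj (l.map ψ) := by
  intro l
  induction l with
  | nil => intro _ _; exact List.isChain_nil
  | cons a l ih =>
    intro hmem hch
    cases l with
    | nil => exact List.isChain_singleton _
    | cons b l' =>
      unfold List.Chain' at hch; rw [List.isChain_cons_cons] at hch
      obtain ⟨i, hi⟩ := hmem a (by simp)
      obtain ⟨j, hj⟩ := hmem b (by simp)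
      rw [List.map_cons, List.map_cons]; unfold List.Chain'; rw [List.isChain_cons_cons]
      constructor
      · rw [← hi, ← hj, hψ, hψ]
        exact (hind i j).mp (hi ▸ hj ▸ hch.1)
      · rw [← List.map_cons]
        exact ih (fun x hx => hmem x (List.mem_cons_of_mem _ hx)) hch.2

/-- The key lemma: if all three simplicial vertices of a region lie on the cycle `C`
and `C` is not contained in the region, then the cycle has an edge from `c` into
the region. -/
lemma region_c_edge
    (f : Fin 9 → V) (hinjf : Function.Injective f)
    (hindf : ∀ i j, G.Adj (f i) (f j) ↔ TGraph.Adj i j)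
    (hclosedf : ∀ i : Fin 9, 3 ≤ i.1 → ∀ v, G.Adj (f i) v → v ∈ Set.range f)
    {c : V} {ic : Fin 9} (hic3 : ic.1 < 3) (hfc : f ic = c)
    {u : V} {C : G.Walk u u} (hC : C.IsCycle)
    (h6 : f 6 ∈ C.support) (h7 : f 7 ∈ C.support) (h8 : f 8 ∈ C.support)
    {v₀ : V} (hv₀s : v₀ ∈ C.support) (hv₀ : v₀ ∉ Set.range f) :
    ∃ x, x ∈ Set.range f ∧ x ≠ c ∧ C.toSubgraph.Adj c x := by
  classical
  by_contra hneg
  push_neg at hneg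
  set X : V → Prop := fun y => y ∈ Set.range f ∧ y ≠ c with hXdef
  set D := C.rotate v₀ hv₀s with hDdef
  have hDc : D.IsCycle := hC.rotate hv₀s
  have hDsub : D.toSubgraph = C.toSubgraph := C.toSubgraph_rotate hv₀s
  set N := D.support.tail with hNdef
  have hnodup : N.Nodup := hDc.support_nodup
  have hsupD : D.support = v₀ :: N := D.support_eq_cons
  have hchainD : List.Chain' G.Adj D.support := D.isChain_adj_support
  have hNne : N ≠ [] := by
    intro h
    have h4 := hDc.three_le_length
    have h5 := D.length_support
    rw [hsupD, h, List.length_cons, List.length_nil] at h5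
    omega
  have hlastN : N.getLast? = some v₀ := by
    have h0 : D.support.getLast? = some v₀ := by
      rw [List.getLast?_eq_getLast_of_ne_nil (by simp)]
      simp
    rw [hsupD, (by simp : v₀ :: N = [v₀] ++ N),
      List.getLast?_append_of_ne_nil _ hNne] at h0
    exact h0
  have hNinfix : ∀ x y : V, [x, y] <:+: N → [x, y] <:+: D.support := fun x y h =>
    h.trans (by rw [hsupD]; exact (List.suffix_cons _ _).isInfix)
  -- membership transfer from C.support to N
  have hmemN : ∀ x, x ∈ C.support → x ∈ N := by
    intro x hx
    have hCne : C.support.tail ≠ [] := by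
      intro h
      have h4 := hC.three_le_length
      have h5 := C.length_support
      rw [C.support_eq_cons, h, List.length_cons, List.length_nil] at h5
      omega
    have hClast : C.support.tail.getLast? = some u := by
      have h0 : C.support.getLast? = some u := by
        rw [List.getLast?_eq_getLast_of_ne_nil (by simp)]
        simp
      rw [C.support_eq_cons, (by simp : u :: C.support.tail = [u] ++ C.support.tail),
        List.getLast?_append_of_ne_nil _ hCne] at h0
      exact h0
    have hx' : x ∈ C.support.tail := by
      rw [C.support_eq_cons] at hx
      rcases List.mem_cons.mp hx with rfl | hx'
      · exact List.mem_of_getLast? hClast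
      · exact hx'
    have hrot := C.support_rotate _ hv₀s
    exact hrot.perm.mem_iff.mpr hx'
  -- transitions into X happen at outer vertices other than c
  have htrans : ∀ z x : V, X x → ¬ X z →
      ([z, x] <:+: D.support ∨ [x, z] <:+: D.support) →
      ∃ i : Fin 9, f i = x ∧ i.1 < 3 ∧ i ≠ ic := by
    intro z x hXx hXz hinf
    obtain ⟨⟨i, rfl⟩, hxc⟩ := hXx
    refine ⟨i, rfl, ?_, fun h => hxc (by rw [h, hfc])⟩
    by_contra hi3
    push_neg at hi3
    have hadj : G.Adj (f i) z := by
      rcases hinf with h | h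
      · exact (rel_of_infix hchainD h).symm
      · exact rel_of_infix hchainD h
    have hzr : z ∈ Set.range f := hclosedf i hi3 z hadj
    have hzc : z = c := by
      by_contra hzc'
      exact hXz ⟨hzr, hzc'⟩
    subst hzc
    rcases hinf with h | h
    · have hA := support_infix_toSubgraph_adj D h
      rw [hDsub] at hA
      exact hneg (f i) ⟨i, rfl⟩ hxc hA
    · have hA := (support_infix_toSubgraph_adj D h).symm
      rw [hDsub] at hA
      exact hneg (f i) ⟨i, rfl⟩ hxc hA
  -- the run containing a given simplicial vertex
  have hrun : ∀ w : Fin 9, 6 ≤ w.1 → f w ∈ C.support →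
      ∃ (pre mid suf : List V) (hp tp : V) (ihh itt : Fin 9),
        N = pre ++ (hp :: (mid ++ [tp])) ++ suf ∧ f w ∈ hp :: (mid ++ [tp]) ∧
        (∀ x ∈ hp :: (mid ++ [tp]), X x) ∧
        hp = f ihh ∧ tp = f itt ∧ ihh.1 < 3 ∧ ihh ≠ ic ∧ itt.1 < 3 ∧ itt ≠ ic ∧
        hp ≠ tp := by
    intro w hw6 hwS
    have hXw : X (f w) := ⟨⟨w, rfl⟩, fun h => by
      have h2 : w = ic := hinjf (by rw [h, hfc])
      omega⟩
    obtain ⟨pre, P, suf, hNdec, hwP, hallP, hbpre, hbsuf⟩ :=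
      run_extract X N.length N le_rfl (f w) (hmemN _ hwS) hXw
    have hPne : P ≠ [] := fun h => by simp [h] at hwP
    have hsufne : suf ≠ [] := by
      rintro rfl
      have h1 : N.getLast? = P.getLast? := by
        rw [hNdec, List.append_nil, List.getLast?_append_of_ne_nil _ hPne]
      rw [hlastN] at h1
      have h2 : v₀ ∈ P := List.mem_of_getLast? h1.symm
      exact hv₀ (hallP v₀ h2).1
    obtain ⟨zs, hzs1, hzs2⟩ : ∃ z, suf.head? = some z ∧ ¬ X z := by
      rcases hbsuf with rfl | h
      · exact absurd rfl hsufne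
      · exact h
    obtain ⟨hp, P₂, rfl⟩ := List.exists_cons_of_ne_nil hPne
    obtain ⟨tp, htp⟩ : ∃ tp, (hp :: P₂).getLast? = some tp :=
      ⟨_, List.getLast?_eq_getLast_of_ne_nil (by simp)⟩
    -- predecessor of hp
    obtain ⟨z1, hz1X, hz1inf⟩ : ∃ z, ¬ X z ∧ [z, hp] <:+: D.support := by
      rcases hbpre with rfl | ⟨z, hz1, hz2⟩
      · refine ⟨v₀, fun hXv => hv₀ hXv.1, ?_⟩
        rw [hsupD, hNdec]
        exact ⟨[], P₂ ++ suf, by simp⟩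
      · obtain ⟨pre₂, rfl⟩ := List.getLast?_eq_some_iff.mp hz1
        refine ⟨z, hz2, hNinfix _ _ ?_⟩
        rw [hNdec]
        exact ⟨pre₂, P₂ ++ suf, by simp⟩
    obtain ⟨ihh, hih1, hih2, hih3⟩ :=
      htrans z1 hp (hallP hp (by simp)) hz1X (Or.inl hz1inf)
    -- successor of tp
    obtain ⟨P₃, hP₃⟩ := List.getLast?_eq_some_iff.mp htp
    obtain ⟨suf₂, rfl⟩ : ∃ suf₂, suf = zs :: suf₂ := by
      cases suf with
      | nil => exact absurd rfl hsufne
      | cons a suf₂ => exact ⟨suf₂, by rw [show a = zs from by simpa using hzs1]⟩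
    have hzsinf : [tp, zs] <:+: D.support := by
      apply hNinfix
      rw [hNdec, hP₃]
      exact ⟨pre ++ P₃, suf₂, by simp⟩
    obtain ⟨itt, hit1, hit2, hit3⟩ :=
      htrans zs tp (hallP tp (by rw [hP₃]; simp)) hzs2 (Or.inr hzsinf)
    -- hp ≠ tp
    have hPnodup : (hp :: P₂).Nodup :=
      hnodup.sublist (show (hp :: P₂) <:+: N from ⟨pre, zs :: suf₂, hNdec.symm⟩).sublist
    have hwne : f w ≠ hp := by
      rw [← hih1]
      intro h
      have h2 := hinjf h
      omega
    have hne : hp ≠ tp :=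
      head_ne_last_of_mid hPnodup rfl htp hwP hwne
    -- normalize : P₂ = P₄ ++ [tp]
    cases P₃ with
    | nil => exact absurd (by simpa using hP₃ : hp = tp ∧ P₂ = []).1 hne
    | cons q P₄ =>
      obtain ⟨hq1, hq2⟩ : hp = q ∧ P₂ = P₄ ++ [tp] := by simpa using hP₃
      subst hq2
      exact ⟨pre, P₄, zs :: suf₂, hp, tp, ihh, itt, hNdec, hwP, hallP,
        hih1.symm, hit1.symm, hih2, hih3, hit2, hit3, hne⟩
  obtain ⟨pre6, mid6, suf6, hp6, tp6, ih6, it6, e6, m6, a6, f6h, f6t, ih6lt, ih6ne,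
    it6lt, it6ne, ne6⟩ := hrun 6 (by decide) h6
  obtain ⟨pre7, mid7, suf7, hp7, tp7, ih7, it7, e7, m7, a7, f7h, f7t, ih7lt, ih7ne,
    it7lt, it7ne, ne7⟩ := hrun 7 (by decide) h7
  obtain ⟨pre8, mid8, suf8, hp8, tp8, ih8, it8, e8, m8, a8, f8h, f8t, ih8lt, ih8ne,
    it8lt, it8ne, ne8⟩ := hrun 8 (by decide) h8
  have trich : ∀ (icx a b l : Fin 9), icx.1 < 3 → a.1 < 3 → a ≠ icx → b.1 < 3 → b ≠ icx →
      l.1 < 3 → l ≠ icx → a ≠ b → l = a ∨ l = b := by decide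
  have hij6 : ih6 ≠ it6 := fun h => ne6 (by rw [f6h, f6t, h])
  have E6 : N = pre6 ++ hp6 :: (mid6 ++ tp6 :: suf6) := by rw [e6]; simp
  have R6nodup : (hp6 :: (mid6 ++ [tp6])).Nodup :=
    hnodup.sublist (show _ <:+: N from ⟨pre6, suf6, e6.symm⟩).sublist
  have htp6mid6 : tp6 ∉ mid6 :=
    not_mem_of_nodup_append (List.nodup_cons.mp R6nodup).2
  have hmem_run : ∀ (pre' mid' suf' : List V) (hp' tp' : V) (ih' it' : Fin 9),
      N = pre' ++ (hp' :: (mid' ++ [tp'])) ++ suf' →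
      hp' = f ih' → tp' = f it' → ih'.1 < 3 → ih' ≠ ic → it'.1 < 3 → it' ≠ ic →
      hp' ≠ tp' →
      hp' :: (mid' ++ [tp']) = hp6 :: (mid6 ++ [tp6]) := by
    intro pre' mid' suf' hp' tp' ih' it' e' fh' ft' hihlt hihne hitlt hitne hne'
    have E' : N = pre' ++ hp' :: (mid' ++ tp' :: suf') := by rw [e']; simp
    have R'nodup : (hp' :: (mid' ++ [tp'])).Nodup :=
      hnodup.sublist (show _ <:+: N from ⟨pre', suf', e'.symm⟩).sublist
    have htpmid' : tp' ∉ mid' :=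
      not_mem_of_nodup_append (List.nodup_cons.mp R'nodup).2
    have hcase_h : hp' = hp6 ∨ hp' = tp6 := by
      rcases trich ic ih6 it6 ih' hic3 ih6lt ih6ne it6lt it6ne hihlt hihne hij6 with h | h
      · exact Or.inl (by rw [fh', f6h, h])
      · exact Or.inr (by rw [fh', f6t, h])
    have hcase_t : tp' = hp6 ∨ tp' = tp6 := by
      rcases trich ic ih6 it6 it' hic3 ih6lt ih6ne it6lt it6ne hitlt hitne hij6 with h | h
      · exact Or.inl (by rw [ft', f6h, h])
      · exact Or.inr (by rw [ft', f6t, h])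
    rcases hcase_h with hh | hh
    · -- same orientation
      have htt : tp' = tp6 := by
        rcases hcase_t with ht | ht
        · exact absurd (hh.trans ht.symm) hne'
        · exact ht
      rw [hh] at E'
      rw [htt] at E' htpmid'
      have hnp6 : hp6 ∉ pre6 := not_mem_of_nodup_append (E6 ▸ hnodup)
      have hnp' : hp6 ∉ pre' := not_mem_of_nodup_append (E' ▸ hnodup)
      obtain ⟨hpre_eq, hrest⟩ := unique_split (E6.symm.trans E') hnp6 hnp'
      have hmideq : mid6 = mid' ∧ suf6 = suf' :=
        unique_split hrest htp6mid6 htpmid'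
      rw [hh, htt, ← hmideq.1]
    · -- reversed orientation: contradiction
      exfalso
      have htt : tp' = hp6 := by
        rcases hcase_t with ht | ht
        · exact ht
        · exact absurd (hh.trans ht.symm) hne'
      have E'2 : N = (pre' ++ tp6 :: mid') ++ hp6 :: suf' := by
        rw [e', hh, htt]; simp
      have hnp6 : hp6 ∉ pre6 := not_mem_of_nodup_append (E6 ▸ hnodup)
      have hnp' : hp6 ∉ pre' ++ tp6 :: mid' := not_mem_of_nodup_append (E'2 ▸ hnodup)
      obtain ⟨hpre_eq, -⟩ := unique_split (E6.symm.trans E'2) hnp6 hnp'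
      have htp6pre : tp6 ∈ pre6 := by rw [hpre_eq]; simp
      have hdisj := (List.nodup_append.mp (E6 ▸ hnodup)).2.2
      exact hdisj tp6 htp6pre tp6 (by simp) rfl
  have h7in : f 7 ∈ hp6 :: (mid6 ++ [tp6]) := by
    rw [← hmem_run pre7 mid7 suf7 hp7 tp7 ih7 it7 e7 f7h f7t ih7lt ih7ne it7lt it7ne ne7]
    exact m7
  have h8in : f 8 ∈ hp6 :: (mid6 ++ [tp6]) := by
    rw [← hmem_run pre8 mid8 suf8 hp8 tp8 ih8 it8 e8 f8h f8t ih8lt ih8ne it8lt it8ne ne8]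
    exact m8
  -- build the path in TGraph and contradict Tfact
  set R : List V := hp6 :: (mid6 ++ [tp6]) with hRdef
  have hRinf : R <:+: N := ⟨pre6, suf6, e6.symm⟩
  have hchainN : List.Chain' G.Adj N := by
    rw [hsupD] at hchainD
    exact hchainD.tail
  have hRchain : List.Chain' G.Adj R := hchainN.infix hRinf
  set ψ : V → Fin 9 := Function.invFun f with hψdef
  have hψ : ∀ i, ψ (f i) = i := fun i => Function.leftInverse_invFun hinjf i
  set Q : List (Fin 9) := R.map ψ with hQdef
  have hQchain : List.Chain' TGraph.Adj Q :=
    chain'_map_of_mem ψ hindf hψ R (fun x hx => (a6 x hx).1) hRchain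
  have hQnodup : Q.Nodup := by
    refine R6nodup.map_on ?_
    intro x hx y hy hxy
    obtain ⟨i, rfl⟩ := (a6 x hx).1
    obtain ⟨j, rfl⟩ := (a6 y hy).1
    rw [hψ, hψ] at hxy
    rw [hxy]
  have hQ6 : (6 : Fin 9) ∈ Q := List.mem_map.mpr ⟨f 6, m6, hψ 6⟩
  have hQ7 : (7 : Fin 9) ∈ Q := List.mem_map.mpr ⟨f 7, h7in, hψ 7⟩
  have hQ8 : (8 : Fin 9) ∈ Q := List.mem_map.mpr ⟨f 8, h8in, hψ 8⟩
  have hQhead : Q.head? = some ih6 := by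
    rw [hQdef, List.head?_map, hRdef]
    simp only [List.head?_cons, Option.map_some]
    rw [f6h, hψ]
  have hQlast : Q.getLast? = some it6 := by
    rw [hQdef, List.getLast?_map, hRdef]
    rw [(by simp : hp6 :: (mid6 ++ [tp6]) = (hp6 :: mid6) ++ [tp6]), List.getLast?_concat]
    simp only [Option.map_some]
    rw [f6t, hψ]
  have hic_mem := Tfact hQchain hQnodup hQ6 hQ7 hQ8 hQhead hQlast ih6lt it6lt ic hic3
  obtain ⟨x, hxR, hxψ⟩ := List.mem_map.mp hic_mem
  obtain ⟨j, rfl⟩ := (a6 x hxR).1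
  rw [hψ] at hxψ
  exact (a6 _ hxR).2 (by rw [hxψ, hfc])

lemma cycle_partners' {u c : V} {C : G.Walk u u} (hC : C.IsCycle)
    {x₁ x₂ x₃ : V} (h1 : C.toSubgraph.Adj c x₁) (h2 : C.toSubgraph.Adj c x₂)
    (h3 : C.toSubgraph.Adj c x₃) : x₁ = x₂ ∨ x₁ = x₃ ∨ x₂ = x₃ := by
  classical
  have hcs : c ∈ C.support := by
    rw [← SimpleGraph.Walk.mem_verts_toSubgraph]
    exact h1.fst_mem
  have hsub := C.toSubgraph_rotate hcs
  rw [← hsub] at h1 h2 h3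
  exact cycle_partners (hC.rotate hcs) h1 h2 h3

end AuxT

open AuxT

/-- If `G` contains `r ≥ 1` `T`-regions (given by the embeddings `φ k`) which
all share one common vertex `c`, an outer vertex of each of them, and which
are otherwise pairwise disjoint, then every cycle of `G` contains at most
`2r + 2` of the `3r` simplicial vertices belonging to these `T`-regions. -/
theorem cycle_misses_simplicial_vertices_of_shared_T_regions
    {V : Type*} [Fintype V] (G : SimpleGraph V) (r : ℕ) (hr : 1 ≤ r)
    (φ : Fin r → Fin 9 → V)
    (hinj : ∀ k, Function.Injective (φ k))
    (hind : ∀ k i j, G.Adj (φ k i) (φ k j) ↔ TGraph.Adj i j)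
    (hclosed : ∀ k, ∀ i : Fin 9, 3 ≤ i.1 → ∀ v, G.Adj (φ k i) v → v ∈ Set.range (φ k))
    (c : V)
    (houter : ∀ k, ∃ i : Fin 9, i.1 < 3 ∧ φ k i = c)
    (hdisj : ∀ k l, k ≠ l → Set.range (φ k) ∩ Set.range (φ l) = {c})
    (u : V) (C : G.Walk u u) (hC : C.IsCycle) :
    {v | v ∈ C.support ∧ ∃ (k : Fin r) (i : Fin 9), 6 ≤ i.1 ∧ v = φ k i}.ncard
      ≤ 2 * r + 2 := by
  classical
  set S : Set V := {v | v ∈ C.support ∧ ∃ (k : Fin r) (i : Fin 9), 6 ≤ i.1 ∧ v = φ k i}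
    with hSdef
  set T : Fin r → Finset V := fun k => ({φ k 6, φ k 7, φ k 8} : Finset V) with hTdef
  set g : Fin r → ℕ := fun k => ((T k) ∩ C.support.toFinset).card with hgdef
  have hi678 : ∀ i : Fin 9, 6 ≤ i.1 → i = 6 ∨ i = 7 ∨ i = 8 := by decide
  have hTcard : ∀ k, (T k).card ≤ 3 := by
    intro k
    apply le_trans (Finset.card_insert_le _ _)
    have := Finset.card_insert_le (φ k 7) ({φ k 8} : Finset V)
    simp only [Finset.card_singleton] at this
    omega
  have hgle : ∀ k, g k ≤ 3 := fun k =>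
    le_trans (Finset.card_le_card (Finset.inter_subset_left)) (hTcard k)
  set F : Finset V := Finset.univ.biUnion (fun k => T k ∩ C.support.toFinset) with hFdef
  have hSsub : S ⊆ ↑F := by
    intro v hv
    obtain ⟨hvs, k, i, hi6, rfl⟩ := hv
    refine Finset.mem_coe.mpr (Finset.mem_biUnion.mpr
      ⟨k, Finset.mem_univ k, Finset.mem_inter.mpr ⟨?_, List.mem_toFinset.mpr hvs⟩⟩)
    rcases hi678 i hi6 with rfl | rfl | rfl <;> simp [hTdef]
  have hmain : S.ncard ≤ ∑ k, g k := by
    have h1 : S.ncard ≤ F.card := by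
      have h2 := Set.ncard_le_ncard hSsub F.finite_toSet
      rwa [Set.ncard_coe_finset] at h2
    exact le_trans h1 Finset.card_biUnion_le
  -- w-vertices are distinct from c
  have hwc : ∀ (k : Fin r) (i : Fin 9), 6 ≤ i.1 → φ k i ≠ c := by
    intro k i hi6 he
    obtain ⟨ick, hick3, hfick⟩ := houter k
    have : i = ick := hinj k (he.trans hfick.symm)
    omega
  by_cases hcase : ∃ k₀ : Fin r, ∀ v ∈ C.support, v ∈ Set.range (φ k₀)
  · obtain ⟨k₀, hk₀⟩ := hcase
    have hg0 : ∀ k, k ≠ k₀ → g k = 0 := by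
      intro k hk
      rw [hgdef]
      simp only [Finset.card_eq_zero]
      rw [Finset.eq_empty_iff_forall_notMem]
      intro v hv
      obtain ⟨hvT, hvsup⟩ := Finset.mem_inter.mp hv
      have hvs : v ∈ C.support := List.mem_toFinset.mp hvsup
      have hv0 : v ∈ Set.range (φ k₀) := hk₀ v hvs
      have hvk : v ∈ Set.range (φ k) := by
        simp only [hTdef, Finset.mem_insert, Finset.mem_singleton] at hvT
        rcases hvT with rfl | rfl | rfl <;> exact Set.mem_range_self _
      have hvc : v = c := by
        have := hdisj k k₀ hk
        have hm : v ∈ Set.range (φ k) ∩ Set.range (φ k₀) := ⟨hvk, hv0⟩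
        rw [this] at hm
        exact hm
      simp only [hTdef, Finset.mem_insert, Finset.mem_singleton] at hvT
      rcases hvT with he | he | he
      · exact hwc k 6 (by decide) (he ▸ hvc)
      · exact hwc k 7 (by decide) (he ▸ hvc)
      · exact hwc k 8 (by decide) (he ▸ hvc)
    have hsum : ∑ k, g k = g k₀ := by
      rw [Finset.sum_eq_single k₀]
      · intro b _ hb; exact hg0 b hb
      · intro hb; exact absurd (Finset.mem_univ k₀) hb
    calc S.ncard ≤ ∑ k, g k := hmain
      _ = g k₀ := hsum
      _ ≤ 3 := hgle k₀
      _ ≤ 2 * r + 2 := by omega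
  · push_neg at hcase
    set B : Finset (Fin r) := Finset.univ.filter (fun k => g k = 3) with hBdef
    have hB2 : B.card ≤ 2 := by
      by_contra hB
      push_neg at hB
      obtain ⟨k₁, hk₁, k₂, hk₂, k₃, hk₃, h12, h13, h23⟩ := Finset.two_lt_card.mp hB
      -- for k ∈ B, all three w's are on the cycle
      have hws : ∀ k ∈ B, ∀ i : Fin 9, 6 ≤ i.1 → φ k i ∈ C.support := by
        intro k hk i hi6
        have hgk : g k = 3 := (Finset.mem_filter.mp hk).2
        have hsub' : T k ∩ C.support.toFinset ⊆ T k := Finset.inter_subset_left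
        have h3 : 3 ≤ g k := by rw [hgk]
        have heq : T k ∩ C.support.toFinset = T k :=
          Finset.eq_of_subset_of_card_le hsub' (le_trans (hTcard k) h3)
        have hiT : φ k i ∈ T k := by
          rcases hi678 i hi6 with rfl | rfl | rfl <;> simp [hTdef]
        rw [← heq] at hiT
        exact List.mem_toFinset.mp (Finset.mem_inter.mp hiT).2
      -- get the c-edges
      have hedge : ∀ k ∈ B, ∃ x, x ∈ Set.range (φ k) ∧ x ≠ c ∧ C.toSubgraph.Adj c x := by
        intro k hk
        obtain ⟨ick, hick3, hfick⟩ := houter k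
        obtain ⟨v₀, hv₀s, hv₀⟩ := hcase k
        exact region_c_edge (φ k) (hinj k) (hind k) (hclosed k) hick3 hfick hC
          (hws k hk 6 (by decide)) (hws k hk 7 (by decide)) (hws k hk 8 (by decide))
          hv₀s hv₀
      obtain ⟨x₁, hx₁r, hx₁c, hx₁⟩ := hedge k₁ hk₁
      obtain ⟨x₂, hx₂r, hx₂c, hx₂⟩ := hedge k₂ hk₂
      obtain ⟨x₃, hx₃r, hx₃c, hx₃⟩ := hedge k₃ hk₃
      have hdist : ∀ (ka kb : Fin r) (xa xb : V), ka ≠ kb →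
          xa ∈ Set.range (φ ka) → xa ≠ c → xb ∈ Set.range (φ kb) → xb ≠ c →
          xa ≠ xb := by
        intro ka kb xa xb hab hxa hxac hxb hxbc he
        subst he
        have hm : xa ∈ Set.range (φ ka) ∩ Set.range (φ kb) := ⟨hxa, hxb⟩
        rw [hdisj ka kb hab] at hm
        exact hxac hm
      rcases cycle_partners' hC hx₁ hx₂ hx₃ with h | h | h
      · exact hdist k₁ k₂ x₁ x₂ h12 hx₁r hx₁c hx₂r hx₂c h
      · exact hdist k₁ k₃ x₁ x₃ h13 hx₁r hx₁c hx₃r hx₃c h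
      · exact hdist k₂ k₃ x₂ x₃ h23 hx₂r hx₂c hx₃r hx₃c h
    have hgsum : ∑ k, g k ≤ 2 * r + B.card := by
      have h1 : ∀ k : Fin r, g k ≤ 2 + (if g k = 3 then 1 else 0) := by
        intro k
        by_cases h : g k = 3
        · simp [h]
        · have := hgle k
          simp [h]
          omega
      calc ∑ k, g k ≤ ∑ k, (2 + (if g k = 3 then 1 else 0)) := Finset.sum_le_sum (fun k _ => h1 k)
        _ = (∑ _k : Fin r, 2) + ∑ k, (if g k = 3 then 1 else 0) := Finset.sum_add_distrib
        _ = 2 * r + ∑ k, (if g k = 3 then 1 else 0) := by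
            rw [Finset.sum_const, Finset.card_univ, Fintype.card_fin, smul_eq_mul,
              Nat.mul_comm]
        _ = 2 * r + B.card := by
            rw [hBdef, Finset.card_filter]
    calc S.ncard ≤ ∑ k, g k := hmain
      _ ≤ 2 * r + B.card := hgsum
      _ ≤ 2 * r + 2 := by omega
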